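/- Uniqueness for the punctured Dirichlet problem: let D ⊂ Z^d be a finite connected domain, z ∈ D, and let λ_1 be the principal eigenvalue of H = (Δσ^{-1}+ξ)1_D. Then λ_1 is not an eigenvalue of the punctured operator (Δσ^{-1}+ξ)1_{D∖{z}}; consequently the Dirichlet problem (Δσ^{-1} + ξ − λ_1) v = 0 on D∖{z}, v = 1_{{z}} outside D∖{z}, has at most one solution. -/

import Mathlib

open scoped BigOperators RealInnerProductSpace

/-- Sites of the lattice `ℤ^d`. -/
abbrev Site (d : ℕ) := Fin d → ℤ

/-- ℓ¹ (graph) distance on `ℤ^d`. -/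
def dist1 {d : ℕ} (x y : Site d) : ℤ := ∑ i : Fin d, |x i - y i|

/-- The discrete Laplacian `(Δf)(z) = (2d)⁻¹ ∑_{|y−z|=1} f(y) − f(z)`. -/
noncomputable def lap {d : ℕ} (f : Site d → ℝ) (z : Site d) : ℝ :=
  (2 * (d : ℝ))⁻¹ * ∑ i : Fin d, (f (z + Pi.single i 1) + f (z - Pi.single i 1)) - f z

/-- The Hamiltonian `H = (Δ σ⁻¹ + ξ) 1_D` with Dirichlet boundary conditions. -/
noncomputable def ham {d : ℕ} (D : Finset (Site d)) (σ ξ : Site d → ℝ)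
    (f : Site d → ℝ) (z : Site d) : ℝ :=
  if z ∈ D then lap (fun y => (σ y)⁻¹ * f y) z + ξ z * f z else 0

/-- `lam` is an eigenvalue of `H = (Δ σ⁻¹ + ξ) 1_D`. -/
def IsEigen {d : ℕ} (D : Finset (Site d)) (σ ξ : Site d → ℝ) (lam : ℝ) : Prop :=
  ∃ f : Site d → ℝ, f ≠ 0 ∧ (∀ z, z ∉ D → f z = 0) ∧ ∀ z, ham D σ ξ f z = lam * f z

/-- `D` is connected in the nearest-neighbour graph of `ℤ^d`. -/
def ConnIn {d : ℕ} (D : Finset (Site d)) : Prop :=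
  ∀ x ∈ D, ∀ y ∈ D, ∃ (k : ℕ) (p : Fin (k + 1) → Site d),
    p 0 = x ∧ p (Fin.last k) = y ∧ (∀ i, p i ∈ D) ∧
    ∀ i : Fin k, dist1 (p i.castSucc) (p i.succ) = 1

section helpers
variable {d : ℕ} {D : Finset (Site d)} {σ ξ : Site d → ℝ}

lemma sum_mul_lap {d : ℕ} {D : Finset (Site d)} (a b : Site d → ℝ) :
    ∑ x ∈ D, b x * lap a x
      = (2 * (d:ℝ))⁻¹ * ∑ x ∈ D, ∑ i : Fin d,
          (b x * a (x + Pi.single i 1) + b x * a (x - Pi.single i 1))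
        - ∑ x ∈ D, b x * a x := by
  have hx : ∀ x : Site d, b x * lap a x
      = (2 * (d:ℝ))⁻¹ * ∑ i : Fin d,
          (b x * a (x + Pi.single i 1) + b x * a (x - Pi.single i 1))
        - b x * a x := by
    intro x
    have : ∑ i : Fin d, (b x * a (x + Pi.single i 1) + b x * a (x - Pi.single i 1))
        = b x * ∑ i : Fin d, (a (x + Pi.single i 1) + a (x - Pi.single i 1)) := by
      rw [Finset.mul_sum]
      exact Finset.sum_congr rfl (fun i _ => by ring)
    rw [this, lap]; ring
  simp_rw [hx]
  rw [Finset.sum_sub_distrib, Finset.mul_sum]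

lemma shift_sum (e : Site d) {u v : Site d → ℝ} (hu : ∀ x ∉ D, u x = 0)
    (hv : ∀ x ∉ D, v x = 0) :
    ∑ x ∈ D, v x * u (x + e) = ∑ y ∈ D, v (y - e) * u y := by
  classical
  have h1 : ∑ x ∈ D.filter (fun x => x + e ∈ D), v x * u (x + e)
      = ∑ x ∈ D, v x * u (x + e) :=
    Finset.sum_filter_of_ne (fun x _ hne => by
      by_contra h; exact hne (by rw [hu _ h, mul_zero]))
  have h2 : ∑ y ∈ D.filter (fun y => y - e ∈ D), v (y - e) * u y
      = ∑ y ∈ D, v (y - e) * u y :=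
    Finset.sum_filter_of_ne (fun y _ hne => by
      by_contra h; exact hne (by rw [hv _ h, zero_mul]))
  rw [← h1, ← h2]
  refine Finset.sum_nbij' (fun x => x + e) (fun y => y - e) ?_ ?_ ?_ ?_ ?_
  · intro a ha; simp only [Finset.mem_filter] at ha ⊢
    exact ⟨ha.2, by simpa using ha.1⟩
  · intro a ha; simp only [Finset.mem_filter] at ha ⊢
    exact ⟨ha.2, by simpa using ha.1⟩
  · intro a _; simp
  · intro a _; simp
  · intro a _; simp

lemma cross_symm {u v : Site d → ℝ} (hu : ∀ x ∉ D, u x = 0) (hv : ∀ x ∉ D, v x = 0) :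
    ∑ x ∈ D, ∑ i : Fin d, (v x * u (x + Pi.single i 1) + v x * u (x - Pi.single i 1))
    = ∑ x ∈ D, ∑ i : Fin d, (u x * v (x + Pi.single i 1) + u x * v (x - Pi.single i 1)) := by
  rw [Finset.sum_comm, Finset.sum_comm (s := D)]
  refine Finset.sum_congr rfl (fun i _ => ?_)
  rw [Finset.sum_add_distrib, Finset.sum_add_distrib]
  have e1 : ∑ x ∈ D, v x * u (x + Pi.single i 1)
      = ∑ y ∈ D, u y * v (y - Pi.single i 1) := by
    rw [shift_sum (Pi.single i 1) hu hv]
    exact Finset.sum_congr rfl (fun y _ => mul_comm _ _)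
  have e2 : ∑ x ∈ D, v x * u (x - Pi.single i 1)
      = ∑ y ∈ D, u y * v (y + Pi.single i 1) := by
    have : ∀ x : Site d, x - Pi.single i 1 = x + (-Pi.single i 1) := by
      intro x; abel
    simp_rw [this]
    rw [shift_sum (-Pi.single i 1) hu hv]
    refine Finset.sum_congr rfl (fun y _ => ?_)
    rw [sub_neg_eq_add, mul_comm]
  rw [e1, e2]; ring

lemma sum_lap_symm {u v : Site d → ℝ} (hu : ∀ x ∉ D, u x = 0) (hv : ∀ x ∉ D, v x = 0) :
    ∑ x ∈ D, v x * lap u x = ∑ x ∈ D, u x * lap v x := by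
  rw [sum_mul_lap, sum_mul_lap, cross_symm hu hv]
  congr 1
  exact Finset.sum_congr rfl (fun x _ => mul_comm _ _)

lemma ham_symm (hσ : ∀ y, 0 < σ y) {f g : Site d → ℝ}
    (hf : ∀ x ∉ D, f x = 0) (hg : ∀ x ∉ D, g x = 0) :
    ∑ x ∈ D, (σ x)⁻¹ * g x * ham D σ ξ f x
    = ∑ x ∈ D, (σ x)⁻¹ * f x * ham D σ ξ g x := by
  have hsplit : ∀ (a b : Site d → ℝ), (∀ x ∉ D, a x = 0) →
      ∑ x ∈ D, (σ x)⁻¹ * b x * ham D σ ξ a x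
      = ∑ x ∈ D, ((σ x)⁻¹ * b x) * lap (fun y => (σ y)⁻¹ * a y) x
        + ∑ x ∈ D, ξ x * ((σ x)⁻¹ * a x) * ((σ x)⁻¹ * b x) * σ x := by
    intro a b _
    rw [← Finset.sum_add_distrib]
    refine Finset.sum_congr rfl (fun x hx => ?_)
    rw [ham, if_pos hx]
    have hc : (σ x)⁻¹ * σ x = 1 := inv_mul_cancel₀ (hσ x).ne'
    linear_combination (-(ξ x * a x * b x * (σ x)⁻¹)) * hc
  rw [hsplit f g hf, hsplit g f hg]
  have h1 : ∑ x ∈ D, ((σ x)⁻¹ * g x) * lap (fun y => (σ y)⁻¹ * f y) x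
      = ∑ x ∈ D, ((σ x)⁻¹ * f x) * lap (fun y => (σ y)⁻¹ * g y) x :=
    sum_lap_symm (fun x hx => by rw [hf x hx, mul_zero])
      (fun x hx => by rw [hg x hx, mul_zero])
  rw [h1]
  congr 1
  exact Finset.sum_congr rfl (fun x _ => by ring)

lemma pairing (hσ : ∀ y, 0 < σ y) {f g : Site d → ℝ}
    (hf : ∀ x ∉ D, f x = 0) (hg : ∀ x ∉ D, g x = 0) {r lam : ℝ}
    (hfe : ∀ x ∈ D, ham D σ ξ f x = r * f x) :
    ∑ x ∈ D, (σ x)⁻¹ * f x * (ham D σ ξ g x - lam * g x)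
    = (r - lam) * ∑ x ∈ D, (σ x)⁻¹ * f x * g x := by
  have e1 : ∑ x ∈ D, (σ x)⁻¹ * f x * (ham D σ ξ g x - lam * g x)
      = ∑ x ∈ D, (σ x)⁻¹ * f x * ham D σ ξ g x
        - lam * ∑ x ∈ D, (σ x)⁻¹ * f x * g x := by
    rw [Finset.mul_sum, ← Finset.sum_sub_distrib]
    exact Finset.sum_congr rfl (fun x _ => by ring)
  rw [e1, ham_symm (ξ := ξ) hσ hg hf]
  have e2 : ∑ x ∈ D, (σ x)⁻¹ * g x * ham D σ ξ f x
      = r * ∑ x ∈ D, (σ x)⁻¹ * f x * g x := by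
    rw [Finset.mul_sum]
    refine Finset.sum_congr rfl (fun x hx => ?_)
    rw [hfe x hx]; ring
  rw [e2]; ring

lemma abs_subeigen (hσ : ∀ y, 0 < σ y) {g : Site d → ℝ} {lam : ℝ} {x : Site d}
    (hx : x ∈ D) (heq : lap (fun y => (σ y)⁻¹ * g y) x + ξ x * g x = lam * g x) :
    lam * |g x| ≤ ham D σ ξ (fun y => |g y|) x := by
  rw [ham, if_pos hx]
  have habs : ∀ y : Site d, (σ y)⁻¹ * |g y| = |(σ y)⁻¹ * g y| := by
    intro y; rw [abs_mul, abs_of_pos (inv_pos.mpr (hσ y))]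
  have hlapg : lap (fun y => (σ y)⁻¹ * g y) x
      = (2 * (d:ℝ))⁻¹ * ∑ i : Fin d, ((σ (x + Pi.single i 1))⁻¹ * g (x + Pi.single i 1)
          + (σ (x - Pi.single i 1))⁻¹ * g (x - Pi.single i 1)) - (σ x)⁻¹ * g x := rfl
  have hlapg' : lap (fun y => (σ y)⁻¹ * |g y|) x
      = (2 * (d:ℝ))⁻¹ * ∑ i : Fin d, ((σ (x + Pi.single i 1))⁻¹ * |g (x + Pi.single i 1)|
          + (σ (x - Pi.single i 1))⁻¹ * |g (x - Pi.single i 1)|) - (σ x)⁻¹ * |g x| := rfl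
  have hSabs : |∑ i : Fin d, ((σ (x + Pi.single i 1))⁻¹ * g (x + Pi.single i 1)
          + (σ (x - Pi.single i 1))⁻¹ * g (x - Pi.single i 1))|
      ≤ ∑ i : Fin d, ((σ (x + Pi.single i 1))⁻¹ * |g (x + Pi.single i 1)|
          + (σ (x - Pi.single i 1))⁻¹ * |g (x - Pi.single i 1)|) := by
    refine le_trans (Finset.abs_sum_le_sum_abs _ _) (Finset.sum_le_sum (fun i _ => ?_))
    rw [habs (x + Pi.single i 1), habs (x - Pi.single i 1)]
    exact abs_add_le _ _
  rw [hlapg']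
  rw [hlapg] at heq
  have hc : (2 * (d:ℝ))⁻¹ * ∑ i : Fin d, ((σ (x + Pi.single i 1))⁻¹ * g (x + Pi.single i 1)
        + (σ (x - Pi.single i 1))⁻¹ * g (x - Pi.single i 1))
      = (lam - ξ x + (σ x)⁻¹) * g x := by linarith
  have h2d : (0:ℝ) ≤ (2 * (d:ℝ))⁻¹ := by positivity
  have key : (lam - ξ x + (σ x)⁻¹) * |g x|
      ≤ (2 * (d:ℝ))⁻¹ * ∑ i : Fin d, ((σ (x + Pi.single i 1))⁻¹ * |g (x + Pi.single i 1)|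
          + (σ (x - Pi.single i 1))⁻¹ * |g (x - Pi.single i 1)|) :=
    calc (lam - ξ x + (σ x)⁻¹) * |g x| ≤ |(lam - ξ x + (σ x)⁻¹) * g x| := by
          rw [abs_mul]
          exact mul_le_mul_of_nonneg_right (le_abs_self _) (abs_nonneg _)
      _ = |(2 * (d:ℝ))⁻¹ * ∑ i : Fin d, ((σ (x + Pi.single i 1))⁻¹ * g (x + Pi.single i 1)
          + (σ (x - Pi.single i 1))⁻¹ * g (x - Pi.single i 1))| := by rw [hc]
      _ = (2 * (d:ℝ))⁻¹ * |∑ i : Fin d, ((σ (x + Pi.single i 1))⁻¹ * g (x + Pi.single i 1)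
          + (σ (x - Pi.single i 1))⁻¹ * g (x - Pi.single i 1))| := by
            rw [abs_mul, abs_of_nonneg h2d]
      _ ≤ _ := mul_le_mul_of_nonneg_left hSabs h2d
  linarith

lemma zero_nbrs (hd : 0 < d) (hσ : ∀ y, 0 < σ y) {g : Site d → ℝ} {lam : ℝ}
    (hgnn : ∀ x, 0 ≤ g x) {y : Site d} (hy : y ∈ D)
    (heq : ham D σ ξ g y = lam * g y) (hy0 : g y = 0) :
    ∀ i : Fin d, g (y + Pi.single i 1) = 0 ∧ g (y - Pi.single i 1) = 0 := by
  rw [ham, if_pos hy, hy0] at heq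
  have hlap : lap (fun x => (σ x)⁻¹ * g x) y
      = (2 * (d:ℝ))⁻¹ * ∑ i : Fin d, ((σ (y + Pi.single i 1))⁻¹ * g (y + Pi.single i 1)
          + (σ (y - Pi.single i 1))⁻¹ * g (y - Pi.single i 1)) - (σ y)⁻¹ * g y := rfl
  rw [hlap, hy0] at heq
  have h2d : (0:ℝ) < (2 * (d:ℝ))⁻¹ := by
    have : (0:ℝ) < (d:ℝ) := by exact_mod_cast hd
    positivity
  have hsum : ∑ i : Fin d, ((σ (y + Pi.single i 1))⁻¹ * g (y + Pi.single i 1)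
      + (σ (y - Pi.single i 1))⁻¹ * g (y - Pi.single i 1)) = 0 := by
    have := heq
    simp only [mul_zero] at this
    have h' : (2 * (d:ℝ))⁻¹ * ∑ i : Fin d, ((σ (y + Pi.single i 1))⁻¹ * g (y + Pi.single i 1)
        + (σ (y - Pi.single i 1))⁻¹ * g (y - Pi.single i 1)) = 0 := by linarith
    exact (mul_eq_zero.mp h').resolve_left (ne_of_gt h2d)
  have hterm : ∀ i : Fin d, ((σ (y + Pi.single i 1))⁻¹ * g (y + Pi.single i 1)
      + (σ (y - Pi.single i 1))⁻¹ * g (y - Pi.single i 1)) = 0 := by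
    intro i
    have hnn : ∀ i ∈ (Finset.univ : Finset (Fin d)),
        0 ≤ (σ (y + Pi.single i 1))⁻¹ * g (y + Pi.single i 1)
          + (σ (y - Pi.single i 1))⁻¹ * g (y - Pi.single i 1) := fun i _ => by
      have := hσ (y + Pi.single i 1); have := hσ (y - Pi.single i 1)
      have := hgnn (y + Pi.single i 1); have := hgnn (y - Pi.single i 1)
      positivity
    exact (Finset.sum_eq_zero_iff_of_nonneg hnn).mp hsum i (Finset.mem_univ i)
  intro i
  have h := hterm i
  have h1 : (0:ℝ) ≤ (σ (y + Pi.single i 1))⁻¹ * g (y + Pi.single i 1) := by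
    have := hσ (y + Pi.single i 1); have := hgnn (y + Pi.single i 1); positivity
  have h2 : (0:ℝ) ≤ (σ (y - Pi.single i 1))⁻¹ * g (y - Pi.single i 1) := by
    have := hσ (y - Pi.single i 1); have := hgnn (y - Pi.single i 1); positivity
  constructor
  · have hz : (σ (y + Pi.single i 1))⁻¹ * g (y + Pi.single i 1) = 0 := by linarith
    rcases mul_eq_zero.mp hz with h' | h'
    · exact absurd h' (ne_of_gt (inv_pos.mpr (hσ _)))
    · exact h'
  · have hz : (σ (y - Pi.single i 1))⁻¹ * g (y - Pi.single i 1) = 0 := by linarith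
    rcases mul_eq_zero.mp hz with h' | h'
    · exact absurd h' (ne_of_gt (inv_pos.mpr (hσ _)))
    · exact h'

lemma step_of_dist1 {x y : Site d} (h : dist1 x y = 1) :
    ∃ i : Fin d, y = x + Pi.single i 1 ∨ y = x - Pi.single i 1 := by
  have hnn : ∀ j : Fin d, 0 ≤ |x j - y j| := fun j => abs_nonneg _
  have hex : ∃ i : Fin d, |x i - y i| ≠ 0 := by
    by_contra hc
    push_neg at hc
    have : dist1 x y = 0 := Finset.sum_eq_zero (fun j _ => hc j)
    omega
  obtain ⟨i, hi⟩ := hex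
  have hgei : 1 ≤ |x i - y i| := by
    have h0 := hnn i
    omega
  have htot : |x i - y i| + ∑ j ∈ Finset.univ.erase i, |x j - y j|
      = ∑ j : Fin d, |x j - y j| :=
    Finset.add_sum_erase Finset.univ (fun j => |x j - y j|) (Finset.mem_univ i)
  rw [dist1] at h
  have hrestnn : 0 ≤ ∑ j ∈ Finset.univ.erase i, |x j - y j| :=
    Finset.sum_nonneg (fun j _ => hnn j)
  have hrest : ∑ j ∈ Finset.univ.erase i, |x j - y j| = 0 := by omega
  have hji : ∀ j : Fin d, j ≠ i → x j = y j := by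
    intro j hj
    have := (Finset.sum_eq_zero_iff_of_nonneg (fun j _ => hnn j)).mp hrest j
      (Finset.mem_erase.mpr ⟨hj, Finset.mem_univ j⟩)
    have := abs_eq_zero.mp this
    omega
  have hii : |x i - y i| = 1 := by omega
  refine ⟨i, ?_⟩
  rcases abs_eq (by norm_num : (0:ℤ) ≤ 1) |>.mp hii with h' | h'
  · right
    funext j
    by_cases hj : j = i
    · subst hj
      simp only [Pi.sub_apply, Pi.single_eq_same]
      omega
    · simp only [Pi.sub_apply, Pi.single_eq_of_ne hj]
      have := hji j hj
      omega
  · left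
    funext j
    by_cases hj : j = i
    · subst hj
      simp only [Pi.add_apply, Pi.single_eq_same]
      omega
    · simp only [Pi.add_apply, Pi.single_eq_of_ne hj]
      have := hji j hj
      omega

lemma zero_of_conn (hd : 0 < d) (hσ : ∀ y, 0 < σ y) (hConn : ConnIn D) {g : Site d → ℝ}
    {lam : ℝ} (hgnn : ∀ x, 0 ≤ g x)
    (heig : ∀ x ∈ D, ham D σ ξ g x = lam * g x) {y₀ : Site d} (hy₀ : y₀ ∈ D)
    (h0 : g y₀ = 0) : ∀ x ∈ D, g x = 0 := by
  intro x hx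
  obtain ⟨k, p, hp0, hpl, hpD, hstep⟩ := hConn y₀ hy₀ x hx
  have main : ∀ m : ℕ, (hm : m < k + 1) → g (p ⟨m, hm⟩) = 0 := by
    intro m
    induction m with
    | zero => intro hm; simpa [show (⟨0, hm⟩ : Fin (k+1)) = 0 from rfl, hp0] using h0
    | succ n ih =>
      intro hm
      have hn : n < k + 1 := by omega
      have hnk : n < k := by omega
      have hprev : g (p ⟨n, hn⟩) = 0 := ih hn
      have hd1 : dist1 (p ⟨n, hn⟩) (p ⟨n + 1, hm⟩) = 1 := by
        have := hstep ⟨n, hnk⟩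
        have e1 : (⟨n, hnk⟩ : Fin k).castSucc = ⟨n, hn⟩ := rfl
        have e2 : (⟨n, hnk⟩ : Fin k).succ = ⟨n + 1, hm⟩ := rfl
        rwa [e1, e2] at this
      obtain ⟨i, hi⟩ := step_of_dist1 hd1
      have hz := zero_nbrs hd hσ hgnn (hpD ⟨n, hn⟩) (heig _ (hpD ⟨n, hn⟩)) hprev i
      rcases hi with h' | h'
      · rw [h']; exact hz.1
      · rw [h']; exact hz.2
  have := main k (by omega)
  rwa [show (⟨k, by omega⟩ : Fin (k+1)) = Fin.last k from rfl, hpl] at this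

end helpers

section perron
variable {d : ℕ}

lemma lap_add (a b : Site d → ℝ) (x : Site d) :
    lap (fun y => a y + b y) x = lap a x + lap b x := by
  simp only [lap]
  have : ∀ i : Fin d, ((a (x + Pi.single i 1) + b (x + Pi.single i 1))
      + (a (x - Pi.single i 1) + b (x - Pi.single i 1)))
      = ((a (x + Pi.single i 1) + a (x - Pi.single i 1))
        + (b (x + Pi.single i 1) + b (x - Pi.single i 1))) := fun i => by ring
  simp_rw [this]
  rw [Finset.sum_add_distrib]
  ring

lemma lap_smul (c : ℝ) (a : Site d → ℝ) (x : Site d) :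
    lap (fun y => c * a y) x = c * lap a x := by
  simp only [lap]
  have : ∀ i : Fin d, (c * a (x + Pi.single i 1) + c * a (x - Pi.single i 1))
      = c * ((a (x + Pi.single i 1) + a (x - Pi.single i 1))) := fun i => by ring
  simp_rw [this]
  rw [← Finset.mul_sum]
  ring

lemma lap_sub (a b : Site d → ℝ) (x : Site d) :
    lap (fun y => a y - b y) x = lap a x - lap b x := by
  simp only [lap]
  have : ∀ i : Fin d, ((a (x + Pi.single i 1) - b (x + Pi.single i 1))
      + (a (x - Pi.single i 1) - b (x - Pi.single i 1)))
      = ((a (x + Pi.single i 1) + a (x - Pi.single i 1))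
        - (b (x + Pi.single i 1) + b (x - Pi.single i 1))) := fun i => by ring
  simp_rw [this]
  rw [Finset.sum_sub_distrib]
  ring

variable (D : Finset (Site d)) (σ ξ : Site d → ℝ)

lemma ham_add (a b : Site d → ℝ) (x : Site d) :
    ham D σ ξ (fun y => a y + b y) x = ham D σ ξ a x + ham D σ ξ b x := by
  simp only [ham]
  by_cases hx : x ∈ D
  · rw [if_pos hx, if_pos hx, if_pos hx]
    have harg : (fun y => (σ y)⁻¹ * (a y + b y))
        = fun y => (σ y)⁻¹ * a y + (σ y)⁻¹ * b y := by funext y; ring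
    rw [harg, lap_add (fun y => (σ y)⁻¹ * a y) (fun y => (σ y)⁻¹ * b y) x]
    ring
  · rw [if_neg hx, if_neg hx, if_neg hx]; ring

lemma ham_smul (c : ℝ) (a : Site d → ℝ) (x : Site d) :
    ham D σ ξ (fun y => c * a y) x = c * ham D σ ξ a x := by
  simp only [ham]
  by_cases hx : x ∈ D
  · rw [if_pos hx, if_pos hx]
    have harg : (fun y => (σ y)⁻¹ * (c * a y)) = fun y => c * ((σ y)⁻¹ * a y) := by
      funext y; ring
    rw [harg, lap_smul c (fun y => (σ y)⁻¹ * a y) x]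
    ring
  · rw [if_neg hx, if_neg hx]; ring

/-- extension of a vector on `D` to the lattice, weighted by `√σ`. -/
noncomputable def ext (h : {x : Site d // x ∈ D} → ℝ) : Site d → ℝ :=
  fun x => if hx : x ∈ D then Real.sqrt (σ x) * h ⟨x, hx⟩ else 0

lemma ext_supp (h : {x : Site d // x ∈ D} → ℝ) : ∀ x ∉ D, ext D σ h x = 0 :=
  fun x hx => dif_neg hx

/-- The symmetrized Hamiltonian as a linear operator on `ℝ^D`. -/
noncomputable def TL : (EuclideanSpace ℝ {x : Site d // x ∈ D}) →ₗ[ℝ]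
    (EuclideanSpace ℝ {x : Site d // x ∈ D}) where
  toFun h := WithLp.toLp 2 (fun x : {x : Site d // x ∈ D} => (Real.sqrt (σ x.1))⁻¹ * ham D σ ξ (ext D σ h) x.1)
  map_add' h k := by
    ext x
    have he : ext D σ (h + k) = fun y => ext D σ h y + ext D σ k y := by
      funext y
      simp only [ext]
      by_cases hy : y ∈ D
      · rw [dif_pos hy, dif_pos hy, dif_pos hy]
        show Real.sqrt (σ y) * (h ⟨y, hy⟩ + k ⟨y, hy⟩) = _
        ring
      · rw [dif_neg hy, dif_neg hy, dif_neg hy]; ring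
    show (Real.sqrt (σ x.1))⁻¹ * ham D σ ξ (ext D σ (h + k)) x.1 = _
    rw [he, ham_add D σ ξ (ext D σ h) (ext D σ k) x.1]
    show _ = (Real.sqrt (σ x.1))⁻¹ * ham D σ ξ (ext D σ h) x.1
      + (Real.sqrt (σ x.1))⁻¹ * ham D σ ξ (ext D σ k) x.1
    ring
  map_smul' c h := by
    ext x
    have he : ext D σ (c • h) = fun y => c * ext D σ h y := by
      funext y
      simp only [ext]
      by_cases hy : y ∈ D
      · rw [dif_pos hy, dif_pos hy]
        show Real.sqrt (σ y) * (c * h ⟨y, hy⟩) = _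
        ring
      · rw [dif_neg hy, dif_neg hy]; ring
    show (Real.sqrt (σ x.1))⁻¹ * ham D σ ξ (ext D σ (c • h)) x.1 = _
    rw [he, ham_smul D σ ξ c (ext D σ h) x.1]
    show _ = c * ((Real.sqrt (σ x.1))⁻¹ * ham D σ ξ (ext D σ h) x.1)
    ring

lemma inner_TL (hσ : ∀ y, 0 < σ y) (h k : EuclideanSpace ℝ {x : Site d // x ∈ D}) :
    ⟪TL D σ ξ h, k⟫ = ∑ x ∈ D, (σ x)⁻¹ * ext D σ k x * ham D σ ξ (ext D σ h) x := by
  rw [PiLp.inner_apply]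
  have step : ∀ x : {x : Site d // x ∈ D},
      ⟪TL D σ ξ h x, k x⟫
      = (fun y => (σ y)⁻¹ * ext D σ k y * ham D σ ξ (ext D σ h) y) x.1 := by
    intro x
    have hσx := hσ x.1
    have hs : Real.sqrt (σ x.1) * Real.sqrt (σ x.1) = σ x.1 :=
      Real.mul_self_sqrt hσx.le
    have hsne : Real.sqrt (σ x.1) ≠ 0 := by
      have := Real.sqrt_pos.mpr hσx; linarith
    rw [Real.inner_apply]
    show (Real.sqrt (σ x.1))⁻¹ * ham D σ ξ (ext D σ h) x.1 * k x = _
    simp only [ext, dif_pos x.2]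
    have hcoef : (σ x.1)⁻¹ * (Real.sqrt (σ x.1) * k ⟨x.1, x.2⟩)
        = (Real.sqrt (σ x.1))⁻¹ * k x := by
      have hk : k ⟨x.1, x.2⟩ = k x := rfl
      rw [hk]
      field_simp
      linear_combination (k x) * hs
    rw [hcoef]
    ring
  calc ∑ x : {x : Site d // x ∈ D}, ⟪TL D σ ξ h x, k x⟫
      = ∑ x : {x : Site d // x ∈ D},
          (fun y => (σ y)⁻¹ * ext D σ k y * ham D σ ξ (ext D σ h) y) x.1 :=
        Finset.sum_congr rfl (fun x _ => step x)
    _ = ∑ x ∈ D, (σ x)⁻¹ * ext D σ k x * ham D σ ξ (ext D σ h) x :=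
        Finset.sum_coe_sort D (fun y => (σ y)⁻¹ * ext D σ k y * ham D σ ξ (ext D σ h) y)

lemma TL_symm (hσ : ∀ y, 0 < σ y) : (TL D σ ξ).IsSymmetric := by
  intro h k
  rw [inner_TL D σ ξ hσ h k, real_inner_comm, inner_TL D σ ξ hσ k h]
  exact ham_symm hσ (ext_supp D σ h) (ext_supp D σ k)

/-- the weighted coordinate function -/
noncomputable def wt (h : {x : Site d // x ∈ D} → ℝ) : Site d → ℝ :=
  fun y => (σ y)⁻¹ * ext D σ h y

lemma ext_eq_sigma_wt (h : {x : Site d // x ∈ D} → ℝ) (hσ : ∀ y, 0 < σ y) (x : Site d) :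
    ext D σ h x = σ x * wt D σ h x := by
  simp only [wt]
  rw [← mul_assoc, mul_inv_cancel₀ (hσ x).ne', one_mul]

lemma quad_eq (hσ : ∀ y, 0 < σ y) (h : EuclideanSpace ℝ {x : Site d // x ∈ D}) :
    ⟪TL D σ ξ h, h⟫
    = (2 * (d:ℝ))⁻¹ * ∑ x ∈ D, ∑ i : Fin d,
        (wt D σ h x * wt D σ h (x + Pi.single i 1)
          + wt D σ h x * wt D σ h (x - Pi.single i 1))
      + ∑ x ∈ D, (ξ x * σ x - 1) * wt D σ h x ^ 2 := by
  rw [inner_TL D σ ξ hσ h h]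
  have hterm : ∀ x ∈ D, (σ x)⁻¹ * ext D σ h x * ham D σ ξ (ext D σ h) x
      = wt D σ h x * lap (wt D σ h) x + ξ x * σ x * wt D σ h x ^ 2 := by
    intro x hx
    rw [ham, if_pos hx]
    have harg : (fun y => (σ y)⁻¹ * ext D σ h y) = wt D σ h := rfl
    rw [harg, ext_eq_sigma_wt D σ h hσ x]
    have : (σ x)⁻¹ * (σ x * wt D σ h x) = wt D σ h x := by
      rw [← mul_assoc, inv_mul_cancel₀ (hσ x).ne', one_mul]
    rw [this]
    ring
  rw [Finset.sum_congr rfl hterm, Finset.sum_add_distrib,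
    sum_mul_lap (wt D σ h) (wt D σ h)]
  have e2 : ∑ x ∈ D, (ξ x * σ x - 1) * wt D σ h x ^ 2
      = ∑ x ∈ D, ξ x * σ x * wt D σ h x ^ 2 - ∑ x ∈ D, wt D σ h x * wt D σ h x := by
    rw [← Finset.sum_sub_distrib]
    exact Finset.sum_congr rfl (fun x _ => by ring)
  rw [e2]
  ring

lemma wt_abs (hσ : ∀ y, 0 < σ y) (h : {x : Site d // x ∈ D} → ℝ) (x : Site d) :
    wt D σ (fun i => |h i|) x = |wt D σ h x| := by
  simp only [wt, ext]
  by_cases hx : x ∈ D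
  · rw [dif_pos hx, dif_pos hx, abs_mul, abs_mul,
      abs_of_pos (inv_pos.mpr (hσ x)), abs_of_nonneg (Real.sqrt_nonneg _)]
  · rw [dif_neg hx, dif_neg hx]; simp

lemma quad_mono (hσ : ∀ y, 0 < σ y) (h : EuclideanSpace ℝ {x : Site d // x ∈ D}) :
    ⟪TL D σ ξ h, h⟫ ≤ ⟪TL D σ ξ (WithLp.toLp 2 (fun i => |h i|)), (WithLp.toLp 2 (fun i => |h i|))⟫ := by
  rw [quad_eq D σ ξ hσ h, quad_eq D σ ξ hσ (WithLp.toLp 2 (fun i => |h i|))]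
  simp only [wt_abs D σ hσ h]
  have hdiag : ∑ x ∈ D, (ξ x * σ x - 1) * |wt D σ h x| ^ 2
      = ∑ x ∈ D, (ξ x * σ x - 1) * wt D σ h x ^ 2 := by
    refine Finset.sum_congr rfl (fun x _ => by rw [sq_abs])
  rw [hdiag]
  have hcross : ∑ x ∈ D, ∑ i : Fin d,
      (wt D σ h x * wt D σ h (x + Pi.single i 1)
        + wt D σ h x * wt D σ h (x - Pi.single i 1))
      ≤ ∑ x ∈ D, ∑ i : Fin d,
      (|wt D σ h x| * |wt D σ h (x + Pi.single i 1)|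
        + |wt D σ h x| * |wt D σ h (x - Pi.single i 1)|) := by
    refine Finset.sum_le_sum (fun x _ => Finset.sum_le_sum (fun i _ => ?_))
    have h1 : wt D σ h x * wt D σ h (x + Pi.single i 1)
        ≤ |wt D σ h x| * |wt D σ h (x + Pi.single i 1)| := by
      rw [← abs_mul]; exact le_abs_self _
    have h2 : wt D σ h x * wt D σ h (x - Pi.single i 1)
        ≤ |wt D σ h x| * |wt D σ h (x - Pi.single i 1)| := by
      rw [← abs_mul]; exact le_abs_self _
    linarith
  have h2d : (0:ℝ) ≤ (2 * (d:ℝ))⁻¹ := by positivity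
  have := mul_le_mul_of_nonneg_left hcross h2d
  linarith

lemma perron (hσ : ∀ y, 0 < σ y) (hne : D.Nonempty) :
    ∃ (r : ℝ) (f : Site d → ℝ), (∀ x ∉ D, f x = 0) ∧ (∀ x, 0 ≤ f x) ∧ f ≠ 0 ∧
      ∀ x, ham D σ ξ f x = r * f x := by
  classical
  obtain ⟨x₀D, hx₀D⟩ := hne
  haveI : Nonempty {x : Site d // x ∈ D} := ⟨⟨x₀D, hx₀D⟩⟩
  set T : EuclideanSpace ℝ {x : Site d // x ∈ D} →L[ℝ]
      EuclideanSpace ℝ {x : Site d // x ∈ D} :=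
    LinearMap.toContinuousLinearMap (TL D σ ξ) with hT
  have hsa : IsSelfAdjoint T := by
    rw [ContinuousLinearMap.isSelfAdjoint_iff_isSymmetric]
    have hcoe : (T : EuclideanSpace ℝ {x : Site d // x ∈ D} →ₗ[ℝ]
        EuclideanSpace ℝ {x : Site d // x ∈ D}) = TL D σ ξ := by
      rw [hT]; exact LinearMap.coe_toContinuousLinearMap _
    rw [hcoe]
    exact TL_symm D σ ξ hσ
  have hcpt : IsCompact (Metric.sphere (0 : EuclideanSpace ℝ {x : Site d // x ∈ D}) 1) :=
    isCompact_sphere 0 1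
  have hsphne : (Metric.sphere (0 : EuclideanSpace ℝ {x : Site d // x ∈ D}) 1).Nonempty := by
    refine ⟨EuclideanSpace.single ⟨x₀D, hx₀D⟩ (1:ℝ), ?_⟩
    simp [EuclideanSpace.norm_single]
  obtain ⟨x₀, hx₀mem, hx₀max⟩ :=
    hcpt.exists_isMaxOn hsphne (T.reApplyInnerSelf_continuous.continuousOn)
  have hx₀norm : ‖x₀‖ = 1 := by simpa using hx₀mem
  set x₁ : EuclideanSpace ℝ {x : Site d // x ∈ D} := WithLp.toLp 2 (fun i => |x₀ i|) with hx₁def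
  have hx₁norm : ‖x₁‖ = 1 := by
    rw [EuclideanSpace.norm_eq] at hx₀norm ⊢
    have hco : ∀ i, ‖x₁ i‖ = ‖x₀ i‖ := by
      intro i
      rw [hx₁def]
      simp [Real.norm_eq_abs, abs_abs]
    simp_rw [hco]
    exact hx₀norm
  have hx₁ne : x₁ ≠ 0 := by
    intro h0
    rw [h0, norm_zero] at hx₁norm
    norm_num at hx₁norm
  have hx₁mem : x₁ ∈ Metric.sphere (0 : EuclideanSpace ℝ {x : Site d // x ∈ D}) 1 := by
    simpa using hx₁norm
  have hre : ∀ y : EuclideanSpace ℝ {x : Site d // x ∈ D},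
      T.reApplyInnerSelf y = ⟪TL D σ ξ y, y⟫ := by
    intro y
    rw [ContinuousLinearMap.reApplyInnerSelf_apply]
    have hTy : T y = TL D σ ξ y := rfl
    rw [hTy, RCLike.re_to_real]
  have hx₁max : IsMaxOn T.reApplyInnerSelf
      (Metric.sphere (0 : EuclideanSpace ℝ {x : Site d // x ∈ D}) 1) x₁ := by
    intro y hy
    have hA := hx₀max hy
    have hB : T.reApplyInnerSelf x₀ ≤ T.reApplyInnerSelf x₁ := by
      rw [hre x₀, hre x₁]
      exact quad_mono D σ ξ hσ x₀
    exact le_trans hA hB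
  have heigen := hsa.hasEigenvector_of_isMaxOn hx₁ne (by rw [hx₁norm]; exact hx₁max)
  set r := (⨆ x : {x : EuclideanSpace ℝ {x : Site d // x ∈ D} // x ≠ 0},
    T.rayleighQuotient x) with hr
  have happly : ∀ i, TL D σ ξ x₁ i = r * x₁ i := by
    intro i
    have h := heigen.apply_eq_smul
    have : TL D σ ξ x₁ = r • x₁ := h
    rw [this]
    rfl
  refine ⟨r, ext D σ x₁, ext_supp D σ x₁, ?_, ?_, ?_⟩
  · intro x
    simp only [ext]
    by_cases hx : x ∈ D
    · rw [dif_pos hx]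
      have : x₁ ⟨x, hx⟩ = |x₀ ⟨x, hx⟩| := rfl
      rw [this]
      exact mul_nonneg (Real.sqrt_nonneg _) (abs_nonneg _)
    · rw [dif_neg hx]
  · obtain ⟨i, hi⟩ := Function.ne_iff.mp (show x₁.ofLp ≠ 0 from fun h0 => hx₁ne (by ext i; simp [h0]))
    intro h0
    have hvx : ext D σ x₁ i.1 = 0 := congrFun h0 i.1
    rw [ext, dif_pos i.2] at hvx
    have hsp : 0 < Real.sqrt (σ i.1) := Real.sqrt_pos.mpr (hσ i.1)
    have : x₁ ⟨i.1, i.2⟩ = 0 := by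
      rcases mul_eq_zero.mp hvx with h' | h'
      · exact absurd h' hsp.ne'
      · exact h'
    rw [Subtype.eta] at this
    exact hi (by simpa using this)
  · intro x
    by_cases hx : x ∈ D
    · have hcoord := happly ⟨x, hx⟩
      have hlhs : TL D σ ξ x₁ ⟨x, hx⟩
          = (Real.sqrt (σ x))⁻¹ * ham D σ ξ (ext D σ x₁) x := rfl
      rw [hlhs] at hcoord
      have hsne2 : Real.sqrt (σ x) ≠ 0 := (Real.sqrt_pos.mpr (hσ x)).ne'
      have hham : ham D σ ξ (ext D σ x₁) x = Real.sqrt (σ x) * (r * x₁ ⟨x, hx⟩) := by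
        rw [← hcoord, ← mul_assoc, mul_inv_cancel₀ hsne2, one_mul]
      rw [hham]
      have hext : ext D σ x₁ x = Real.sqrt (σ x) * x₁ ⟨x, hx⟩ := dif_pos hx
      rw [hext]
      ring
    · rw [ham, if_neg hx, ext_supp D σ x₁ x hx, mul_zero]

end perron

/-- Uniqueness for the punctured Dirichlet problem: if `λ₁` is the principal
eigenvalue of `H = (Δσ⁻¹+ξ)1_D` on a finite connected `D` and `z ∈ D`, then `λ₁` is not an
eigenvalue of the punctured operator `(Δσ⁻¹+ξ)1_{D∖{z}}`; consequently the Dirichlet problem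
`(Δσ⁻¹ + ξ − λ₁)v = 0` on `D∖{z}`, `v = 1_{{z}}` outside `D∖{z}`, has at most one solution. -/
theorem punctured_dirichlet_uniqueness {d : ℕ} (hd : 0 < d)
    (D : Finset (Site d)) (hConn : ConnIn D) (z : Site d) (hz : z ∈ D)
    (σ ξ : Site d → ℝ) (hσ : ∀ y, 0 < σ y) (lam1 : ℝ)
    (h1 : IsEigen D σ ξ lam1) (h2 : ∀ mu, IsEigen D σ ξ mu → mu ≤ lam1) :
    ¬ IsEigen (D.erase z) σ ξ lam1 ∧
    ∀ v w : Site d → ℝ,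
      ((∀ y ∈ D.erase z,
          lap (fun x => (σ x)⁻¹ * v x) y + ξ y * v y - lam1 * v y = 0) ∧
        (∀ y, y ∉ D.erase z → v y = if y = z then 1 else 0)) →
      ((∀ y ∈ D.erase z,
          lap (fun x => (σ x)⁻¹ * w x) y + ξ y * w y - lam1 * w y = 0) ∧
        (∀ y, y ∉ D.erase z → w y = if y = z then 1 else 0)) →
      v = w := by
  classical
  -- Perron eigenfunction of the full operator
  obtain ⟨r, fP, hPsupp, hPnn, hPne, hPeig⟩ := perron D σ ξ hσ ⟨z, hz⟩
  have hPeigD : ∀ x ∈ D, ham D σ ξ fP x = r * fP x := fun x _ => hPeig x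
  have hPpos : ∀ x ∈ D, 0 < fP x := by
    intro x hx
    rcases (hPnn x).lt_or_eq with h | h
    · exact h
    · exfalso
      have hall := zero_of_conn hd hσ hConn hPnn hPeigD hx h.symm
      apply hPne
      funext y
      by_cases hy : y ∈ D
      · simpa using hall y hy
      · simpa using hPsupp y hy
  -- r = lam1
  obtain ⟨f₀, hf₀ne, hf₀supp, hf₀eig⟩ := h1
  have hrle : r ≤ lam1 := h2 r ⟨fP, hPne, hPsupp, hPeig⟩
  have hsub0 : ∀ x ∈ D, lam1 * |f₀ x| ≤ ham D σ ξ (fun y => |f₀ y|) x := by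
    intro x hx
    have hx' := hf₀eig x
    rw [ham, if_pos hx] at hx'
    exact abs_subeigen hσ hx hx'
  have habs0supp : ∀ x ∉ D, (fun y => |f₀ y|) x = 0 := fun x hx => by
    simp [hf₀supp x hx]
  have hpair := pairing (g := fun y => |f₀ y|) (lam := lam1) hσ hPsupp habs0supp hPeigD
  have hLHSnn : 0 ≤ ∑ x ∈ D, (σ x)⁻¹ * fP x
      * (ham D σ ξ (fun y => |f₀ y|) x - lam1 * |f₀ x|) := by
    refine Finset.sum_nonneg (fun x hx => ?_)
    refine mul_nonneg (mul_nonneg (inv_pos.mpr (hσ x)).le (hPnn x)) ?_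
    exact sub_nonneg.mpr (hsub0 x hx)
  have hsumpos : 0 < ∑ x ∈ D, (σ x)⁻¹ * fP x * |f₀ x| := by
    obtain ⟨x₂, hx₂⟩ := Function.ne_iff.mp hf₀ne
    have hx₂ne : f₀ x₂ ≠ 0 := by simpa using hx₂
    have hx₂D : x₂ ∈ D := by
      by_contra hc
      exact hx₂ne (hf₀supp x₂ hc)
    refine Finset.sum_pos' (fun x _ => ?_) ⟨x₂, hx₂D, ?_⟩
    · exact mul_nonneg (mul_nonneg (inv_pos.mpr (hσ x)).le (hPnn x)) (abs_nonneg _)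
    · exact mul_pos (mul_pos (inv_pos.mpr (hσ x₂)) (hPpos x₂ hx₂D)) (abs_pos.mpr hx₂ne)
  have hler : lam1 ≤ r := by
    have h3 : 0 ≤ (r - lam1) * ∑ x ∈ D, (σ x)⁻¹ * fP x * |f₀ x| := by
      rw [← hpair]
      convert hLHSnn using 2
    nlinarith [h3, hsumpos]
  have hreq : r = lam1 := le_antisymm hrle hler
  subst hreq
  -- Part 1
  have hpart1 : ¬ IsEigen (D.erase z) σ ξ r := by
    rintro ⟨g, hgne, hgsupp, hgeig⟩
    have hgsuppD : ∀ x ∉ D, g x = 0 := fun x hx =>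
      hgsupp x (fun hmem => hx (Finset.mem_of_mem_erase hmem))
    have hgz : g z = 0 := hgsupp z (Finset.notMem_erase z D)
    have hgAnn : ∀ x, 0 ≤ (fun y => |g y|) x := fun x => abs_nonneg _
    have hsub : ∀ x ∈ D, r * |g x| ≤ ham D σ ξ (fun y => |g y|) x := by
      intro x hx
      by_cases hxz : x = z
      · subst hxz
        rw [show |g x| = 0 by rw [hgz, abs_zero], mul_zero, ham, if_pos hx]
        have hlap : lap (fun y => (σ y)⁻¹ * |g y|) x
            = (2 * (d:ℝ))⁻¹ * ∑ i : Fin d,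
                ((σ (x + Pi.single i 1))⁻¹ * |g (x + Pi.single i 1)|
                  + (σ (x - Pi.single i 1))⁻¹ * |g (x - Pi.single i 1)|)
              - (σ x)⁻¹ * |g x| := rfl
        rw [hlap, show |g x| = 0 by rw [hgz, abs_zero]]
        have hsum : 0 ≤ ∑ i : Fin d,
            ((σ (x + Pi.single i 1))⁻¹ * |g (x + Pi.single i 1)|
              + (σ (x - Pi.single i 1))⁻¹ * |g (x - Pi.single i 1)|) := by
          refine Finset.sum_nonneg (fun i _ => ?_)
          have h1 := mul_nonneg (inv_pos.mpr (hσ (x + Pi.single i 1))).le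
            (abs_nonneg (g (x + Pi.single i 1)))
          have h2 := mul_nonneg (inv_pos.mpr (hσ (x - Pi.single i 1))).le
            (abs_nonneg (g (x - Pi.single i 1)))
          linarith
        have h2d : (0:ℝ) ≤ (2 * (d:ℝ))⁻¹ := by positivity
        nlinarith [mul_nonneg h2d hsum]
      · have hmem : x ∈ D.erase z := Finset.mem_erase.mpr ⟨hxz, hx⟩
        have hx' := hgeig x
        rw [ham, if_pos hmem] at hx'
        exact abs_subeigen hσ hx hx'
    have hgAsupp : ∀ x ∉ D, (fun y => |g y|) x = 0 := fun x hx => by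
      simp [hgsuppD x hx]
    have hpair2 := pairing (g := fun y => |g y|) (lam := r) hσ hPsupp hgAsupp hPeigD
    have hz2 : ∑ x ∈ D, (σ x)⁻¹ * fP x
        * (ham D σ ξ (fun y => |g y|) x - r * |g x|) = 0 := by
      rw [hpair2]; ring
    have hterms := (Finset.sum_eq_zero_iff_of_nonneg (fun x hx => by
      refine mul_nonneg (mul_nonneg (inv_pos.mpr (hσ x)).le (hPnn x)) ?_
      exact sub_nonneg.mpr (hsub x hx))).mp hz2
    have heigA : ∀ x ∈ D, ham D σ ξ (fun y => |g y|) x = r * |g x| := by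
      intro x hx
      have h0 := hterms x hx
      have hfpos : 0 < (σ x)⁻¹ * fP x := mul_pos (inv_pos.mpr (hσ x)) (hPpos x hx)
      rcases mul_eq_zero.mp h0 with h' | h'
      · exact absurd h' hfpos.ne'
      · linarith [h']
    have hallz := zero_of_conn hd hσ hConn hgAnn heigA hz
      (by simp [hgz])
    apply hgne
    funext y
    by_cases hy : y ∈ D
    · simpa using abs_eq_zero.mp (hallz y hy)
    · simpa using hgsuppD y hy
  refine ⟨hpart1, ?_⟩
  intro v w hv hw
  by_contra hne2
  apply hpart1
  refine ⟨fun y => v y - w y, ?_, ?_, ?_⟩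
  · intro h0
    apply hne2
    funext y
    have := congrFun h0 y
    simp only [Pi.zero_apply] at this
    linarith [this]
  · intro y hy
    show v y - w y = 0
    rw [hv.2 y hy, hw.2 y hy]
    ring
  · intro y
    by_cases hy : y ∈ D.erase z
    · rw [ham, if_pos hy]
      have hlapsub : lap (fun t => (σ t)⁻¹ * (v t - w t)) y
          = lap (fun t => (σ t)⁻¹ * v t) y - lap (fun t => (σ t)⁻¹ * w t) y := by
        have harg : (fun t => (σ t)⁻¹ * (v t - w t))
            = fun t => (σ t)⁻¹ * v t - (σ t)⁻¹ * w t := by funext t; ring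
        rw [harg, lap_sub]
      rw [hlapsub]
      have hv1 := hv.1 y hy
      have hw1 := hw.1 y hy
      linarith [hv1, hw1]
    · rw [ham, if_neg hy]
      show (0:ℝ) = r * (v y - w y)
      rw [hv.2 y hy, hw.2 y hy]
      ring
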